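/- Let u = p q u₁ and v = p q v₁ be binary words of length n ≥ 3 (with u₁, v₁ of length n−2 and {p,q} = {0,1}). If D_2(v) ⊆ D_2(u) and the first coordinates satisfy u_1 = v_1 = p, u_2 = v_2 = q, then D_1(v₁) ⊆ D_1(u₁). -/

import Mathlib

/-- The set of subsequences of `u` of length `u.length - t`. -/
def Dset (t : ℕ) (u : List Bool) : Set (List Bool) :=
  {w | w.Sublist u ∧ w.length = u.length - t}

private lemma cons_sublist_cons_cases {α : Type*} {a b : α} {w l : List α}
    (h : (a :: w).Sublist (b :: l)) : (a = b ∧ w.Sublist l) ∨ (a :: w).Sublist l := by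
  cases h with
  | cons _ h => exact Or.inr h
  | cons_cons _ h => exact Or.inl ⟨rfl, h⟩

theorem two_dominant_common_prefix (n : ℕ) (hn : 3 ≤ n) (p q : Bool) (hpq : p ≠ q)
    (u₁ v₁ : List Bool) (hu₁ : u₁.length = n - 2) (hv₁ : v₁.length = n - 2)
    (hdom : Dset 2 (p :: q :: v₁) ⊆ Dset 2 (p :: q :: u₁)) :
    Dset 1 v₁ ⊆ Dset 1 u₁ := by
  rintro w ⟨hsub, hlen⟩
  have hmem : (q :: w) ∈ Dset 2 (p :: q :: v₁) := by
    constructor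
    · exact ((hsub.cons₂ q).cons p)
    · simp only [List.length_cons]
      omega
  obtain ⟨hsub', hlen'⟩ := hdom hmem
  constructor
  · rcases cons_sublist_cons_cases hsub' with ⟨heq, _⟩ | h
    · exact absurd heq.symm hpq
    · rcases cons_sublist_cons_cases h with ⟨_, h2⟩ | h2
      · exact h2
      · exact (List.sublist_cons_self q w).trans h2
  · omega
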